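/- For every ε > 0 there exists n₀ such that every T_3-free partially directed 3-graph H on n ≥ n₀ vertices satisfies e_u(H) + (5/3)·e_d(H) ≤ (1+ε)·C(n,3), where C(n,3) is the binomial coefficient 'n choose 3'. (In other words, π(T_3, 5/3) = 1.) -/

import Mathlib

section Defs

variable {V W : Type*}

/-- A clause is a finite set of literals; a literal is a variable paired with a polarity
(`true` = positive, `false` = negative). -/
abbrev SatClause (V : Type*) := Finset (V × Bool)

/-- A formula is a finite set of clauses. -/
abbrev SatFormula (V : Type*) := Finset (SatClause V)

/-- The set of variables used by a clause. -/
def clauseVars [DecidableEq V] (C : SatClause V) : Finset V := C.image Prod.fst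

/-- A valid `k`-SAT clause: `k` literals on `k` distinct variables. -/
def IsKClause [DecidableEq V] (k : ℕ) (C : SatClause V) : Prop :=
  C.card = k ∧ (clauseVars C).card = k

/-- A valid `k`-SAT formula. -/
def IsKFormula [DecidableEq V] (k : ℕ) (G : SatFormula V) : Prop :=
  ∀ C ∈ G, IsKClause k C

/-- An assignment satisfies a clause if it makes all of its literals true. -/
def SatisfiesClause (a : V → Bool) (C : SatClause V) : Prop := ∀ l ∈ C, a l.1 = l.2

/-- A formula is minimal if every clause has a witness assignment satisfying it and no other
clause. -/
def MinimalFormula (G : SatFormula V) : Prop :=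
  ∀ C ∈ G, ∃ w : V → Bool, SatisfiesClause w C ∧ ∀ C' ∈ G, SatisfiesClause w C' → C' = C

/-- A formula is simple if no two distinct clauses use the same set of variables. -/
def SimpleFormula [DecidableEq V] (G : SatFormula V) : Prop :=
  ∀ C ∈ G, ∀ C' ∈ G, clauseVars C = clauseVars C' → C = C'

/-- A formula is unate if every variable occurs with only one polarity. -/
def UnateFormula (G : SatFormula V) : Prop :=
  ∀ x : V, ¬ ((∃ C ∈ G, (x, true) ∈ C) ∧ (∃ C ∈ G, (x, false) ∈ C))

/-- The set of variables used by a formula. -/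
def formulaVars [DecidableEq V] (G : SatFormula V) : Finset V := G.biUnion clauseVars

/-- `f` is a `k`-SAT function: it is computed by some `k`-SAT formula (value `1` iff some
clause has all its literals satisfied). -/
def IsKSatFunction (k n : ℕ) (f : (Fin n → Bool) → Bool) : Prop :=
  ∃ G : SatFormula (Fin n), IsKFormula k G ∧
    ∀ a : Fin n → Bool, f a = true ↔ ∃ C ∈ G, SatisfiesClause a C

/-- Relabel the variables of a formula along `φ`. -/
def mapFormula [DecidableEq V] [DecidableEq W] (φ : W → V) (F : SatFormula W) : SatFormula V :=
  F.image (fun C => C.image (fun l => (φ l.1, l.2)))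

/-- `G'` is a copy of `F`: it is obtained from `F` by an injective relabeling of variables. -/
def IsCopyOf [DecidableEq V] [DecidableEq W] (F : SatFormula W) (G' : SatFormula V) : Prop :=
  ∃ φ : W → V, Set.InjOn φ ↑(formulaVars F) ∧ G' = mapFormula φ F

/-- The number of copies of `F` in `G`, i.e. of subformulae of `G` isomorphic to `F`. -/
noncomputable def copyCount [DecidableEq V] [DecidableEq W] (F : SatFormula W)
    (G : SatFormula V) : ℕ :=
  Set.ncard {G' : SatFormula V | G' ⊆ G ∧ IsCopyOf F G'}

/-- The `b`-blowup of a clause: replace each literal by the literal of the same polarity on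
one of the `b` duplicates of its variable, in all possible ways. -/
def clauseBlowup [DecidableEq V] (b : ℕ) (C : SatClause V) :
    Finset (SatClause (V × Fin b)) :=
  (C.pi (fun _ => (Finset.univ : Finset (Fin b)))).image
    (fun g => C.attach.image (fun l => ((l.1.1, g l.1 l.2), l.1.2)))

/-- The `b`-blowup of a formula. -/
def formulaBlowup [DecidableEq V] (b : ℕ) (G : SatFormula V) : SatFormula (V × Fin b) :=
  G.biUnion (clauseBlowup b)

/-- The weight of a formula on `n` variables:
`wt(G) = Σ_i log₂(i+1)·α_i(G)` where `α_i(G)·C(n,k)` counts the `k`-sets of variables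
supporting exactly `i` clauses. -/
noncomputable def formulaWt (k n : ℕ) (G : SatFormula (Fin n)) : ℝ :=
  (∑ S ∈ (Finset.univ : Finset (Fin n)).powersetCard k,
    Real.logb 2 (((G.filter (fun C => clauseVars C = S)).card : ℝ) + 1)) / (n.choose k)

/-- A partially directed graph: a set of undirected edges together with a set of directed
(pointed) edges. -/
structure PDG (V : Type*) where
  undir : Finset (Finset V)
  dir : Finset (Finset V × V)

/-- `H` is a valid `k`-PDG: all edges have `k` vertices, each directed edge is pointed at one
of its vertices, and each `k`-set carries at most one edge (undirected or directed). -/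
def PDG.IsValid (k : ℕ) (H : PDG V) : Prop :=
  (∀ e ∈ H.undir, e.card = k) ∧
  (∀ p ∈ H.dir, p.1.card = k ∧ p.2 ∈ p.1) ∧
  (∀ p ∈ H.dir, p.1 ∉ H.undir) ∧
  (∀ p ∈ H.dir, ∀ q ∈ H.dir, p.1 = q.1 → p = q)

/-- `F` is a subgraph of `H`: a copy of `F` can be obtained from `H` by deleting vertices,
deleting edges, and/or forgetting directions of edges. -/
def PDG.IsSubgraph [DecidableEq V] (F : PDG W) (H : PDG V) : Prop :=
  ∃ φ : W → V, Function.Injective φ ∧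
    (∀ e ∈ F.undir, e.image φ ∈ H.undir ∨ ∃ v, (e.image φ, v) ∈ H.dir) ∧
    (∀ p ∈ F.dir, (p.1.image φ, φ p.2) ∈ H.dir)

/-- The image of a PDG under a relabeling of vertices. -/
def PDG.map [DecidableEq V] (φ : W → V) (F : PDG W) : PDG V :=
  ⟨F.undir.image (Finset.image φ), F.dir.image (fun p => (p.1.image φ, φ p.2))⟩

/-- The PDG `T_k` on vertex set `{0, …, k}` (0-indexed): undirected edges everything-but-`k`
and everything-but-`k-2`, and the edge everything-but-`k-1` directed toward `k`. -/
def TkPDG (k : ℕ) : PDG (Fin (k + 1)) where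
  undir := { Finset.univ.erase ⟨k, Nat.lt_succ_self k⟩,
             Finset.univ.erase ⟨k - 2, by omega⟩ }
  dir := { (Finset.univ.erase ⟨k - 1, by omega⟩, ⟨k, Nat.lt_succ_self k⟩) }

/-- A semisimple formula: every `k`-set of variables supports at most one clause, or exactly
two clauses whose polarities differ on exactly one variable. -/
def SemisimpleFormula [DecidableEq V] (G : SatFormula V) : Prop :=
  ∀ C₁ ∈ G, ∀ C₂ ∈ G, C₁ ≠ C₂ → clauseVars C₁ = clauseVars C₂ →
    (((C₁ \ C₂).image Prod.fst).card = 1 ∧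
      ∀ C₃ ∈ G, clauseVars C₃ = clauseVars C₁ → C₃ = C₁ ∨ C₃ = C₂)

/-- The type of a (semisimple) formula: an undirected edge on each variable set supporting
exactly one clause, and for each variable set supporting two clauses a directed edge pointed
at the variable where the two clauses differ. -/
def formulaType [DecidableEq V] (G : SatFormula V) : PDG V where
  undir := (G.filter (fun C => ∀ C' ∈ G, clauseVars C' = clauseVars C → C' = C)).image
    clauseVars
  dir := ((G ×ˢ G).filter (fun p => p.1 ≠ p.2 ∧ clauseVars p.1 = clauseVars p.2)).biUnion
    (fun p => ((p.1 \ p.2).image Prod.fst).image (fun v => (clauseVars p.1, v)))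

end Defs

section Aux

open Finset

variable {n : ℕ}

/-- All edges (undirected, plus supports of directed edges). -/
def Eset (H : PDG (Fin n)) : Finset (Finset (Fin n)) :=
  H.undir ∪ H.dir.image Prod.fst

/-- Number of edges containing a given set. -/
def deg (H : PDG (Fin n)) (R : Finset (Fin n)) : ℕ :=
  ((Eset H).filter (fun e => R ⊆ e)).card

/-- Link of a pair. -/
def lk (H : PDG (Fin n)) (R : Finset (Fin n)) : Finset (Fin n) :=
  (Finset.univ \ R).filter (fun z => insert z R ∈ Eset H)

lemma card_Eset_mem {H : PDG (Fin n)} (hval : H.IsValid 3) :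
    ∀ e ∈ Eset H, e.card = 3 := by
  intro e he
  rcases Finset.mem_union.1 he with h | h
  · exact hval.1 e h
  · obtain ⟨p, hp, rfl⟩ := Finset.mem_image.1 h
    exact (hval.2.1 p hp).1

lemma deg_eq_lk {H : PDG (Fin n)} (hval : H.IsValid 3) {R : Finset (Fin n)}
    (hR : R.card = 2) : deg H R = (lk H R).card := by
  unfold deg lk
  symm
  apply Finset.card_bij (fun z _ => insert z R)
  · intro z hz
    simp only [mem_filter, mem_sdiff, mem_univ, true_and] at hz ⊢
    exact ⟨hz.2, subset_insert _ _⟩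
  · intro z hz z' hz' h
    simp only [mem_filter, mem_sdiff, mem_univ, true_and] at hz hz'
    have : z ∈ insert z' R := h ▸ mem_insert_self z R
    rcases mem_insert.1 this with h' | h'
    · exact h'
    · exact absurd h' hz.1
  · intro e he
    simp only [mem_filter] at he
    have h3 : e.card = 3 := card_Eset_mem hval e he.1
    have hss : R ⊂ e := lt_of_le_of_ne he.2 (by
      intro h; rw [h, h3] at hR; omega)
    obtain ⟨z, hze, hzR⟩ := Finset.exists_of_ssubset hss
    refine ⟨z, ?_, ?_⟩
    · have heq : insert z R = e := by
        apply Finset.eq_of_subset_of_card_le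
        · exact Finset.insert_subset hze he.2
        · rw [Finset.card_insert_of_notMem hzR, hR, h3]
      simp only [mem_filter, mem_sdiff, mem_univ, true_and]
      exact ⟨hzR, heq ▸ he.1⟩
    · apply Finset.eq_of_subset_of_card_le
      · exact Finset.insert_subset hze he.2
      · rw [Finset.card_insert_of_notMem hzR, hR, h3]

lemma deg_le {H : PDG (Fin n)} (hval : H.IsValid 3) {R : Finset (Fin n)}
    (hR : R.card = 2) : deg H R + 2 ≤ n := by
  have h1 : deg H R = (lk H R).card := deg_eq_lk hval hR
  have h2 : lk H R ⊆ Finset.univ \ R := Finset.filter_subset _ _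
  have h3 : (Finset.univ \ R).card = n - 2 := by
    rw [Finset.card_sdiff_of_subset (Finset.subset_univ R), hR, Finset.card_univ, Fintype.card_fin]
  have h4 : R.card ≤ n := by
    simpa using Finset.card_le_univ R
  have := Finset.card_le_card h2
  omega

lemma sum_deg {H : PDG (Fin n)} (hval : H.IsValid 3) :
    ∑ R ∈ Finset.univ.powersetCard 2, deg H R = 3 * (Eset H).card := by
  unfold deg
  have h1 : ∀ R : Finset (Fin n), ((Eset H).filter (fun e => R ⊆ e)).card
      = ∑ e ∈ Eset H, if R ⊆ e then 1 else 0 := by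
    intro R; rw [Finset.card_filter]
  simp_rw [h1]
  rw [Finset.sum_comm]
  have h2 : ∀ e ∈ Eset H,
      (∑ R ∈ Finset.univ.powersetCard 2, if R ⊆ e then 1 else 0) = 3 := by
    intro e he
    rw [← Finset.card_filter]
    have : (Finset.univ.powersetCard 2).filter (fun R => R ⊆ e) = e.powersetCard 2 := by
      ext S
      simp only [Finset.mem_filter, Finset.mem_powersetCard, Finset.subset_univ, true_and]
      tauto
    rw [this, Finset.card_powersetCard, card_Eset_mem hval e he]; rfl
  rw [Finset.sum_congr rfl h2, Finset.sum_const, smul_eq_mul, mul_comm]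

lemma dirdeg_le {H : PDG (Fin n)} (hval : H.IsValid 3) (R : Finset (Fin n)) :
    (H.dir.filter (fun p => R ⊆ p.1)).card ≤ deg H R := by
  apply Finset.card_le_card_of_injOn (fun p => p.1)
  · intro p hp
    simp only [mem_filter] at hp ⊢
    have hp' : p ∈ H.dir ∧ R ⊆ p.1 := by simpa using hp
    exact Finset.mem_filter.2 ⟨Finset.mem_union_right _ (Finset.mem_image_of_mem _ hp'.1), hp'.2⟩
  · intro p hp q hq h
    simp only [Finset.coe_filter, Set.mem_setOf_eq] at hp hq
    exact hval.2.2.2 p hp.1 q hq.1 h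

lemma Eset_card {H : PDG (Fin n)} (hval : H.IsValid 3) :
    (Eset H).card = H.undir.card + H.dir.card := by
  unfold Eset
  rw [Finset.card_union_of_disjoint, Finset.card_image_of_injOn]
  · intro p hp q hq h
    exact hval.2.2.2 p hp q hq h
  · rw [Finset.disjoint_right]
    intro e he
    obtain ⟨p, hp, rfl⟩ := Finset.mem_image.1 he
    exact hval.2.2.1 p hp

lemma mem_Eset_cases {H : PDG (Fin n)} {e : Finset (Fin n)} (he : e ∈ Eset H) :
    e ∈ H.undir ∨ ∃ v, (e, v) ∈ H.dir := by
  rcases Finset.mem_union.1 he with h | h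
  · exact Or.inl h
  · obtain ⟨p, hp, rfl⟩ := Finset.mem_image.1 h
    exact Or.inr ⟨p.2, hp⟩

lemma links_disjoint {H : PDG (Fin n)} (hval : H.IsValid 3)
    (hfree : ¬ (TkPDG 3).IsSubgraph H) {p : Finset (Fin n) × Fin n} (hp : p ∈ H.dir)
    {w1 w2 : Fin n} (hw12 : w1 ≠ w2) (hA : p.1.erase p.2 = {w1, w2}) :
    Disjoint (lk H {w1, w2}) (lk H {p.2, w1}) := by
  set v := p.2 with hv
  have hvA : v ∈ p.1 := (hval.2.1 p hp).2
  have hv1 : v ≠ w1 := by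
    intro h
    have : w1 ∈ p.1.erase v := by rw [hA]; simp
    exact (Finset.notMem_erase v p.1) (h ▸ this)
  have hv2 : v ≠ w2 := by
    intro h
    have : w2 ∈ p.1.erase v := by rw [hA]; simp
    exact (Finset.notMem_erase v p.1) (h ▸ this)
  have hA' : p.1 = insert v {w1, w2} := by
    rw [← hA, Finset.insert_erase hvA]
  rw [Finset.disjoint_left]
  intro z hz1 hz2
  simp only [lk, Finset.mem_filter, Finset.mem_sdiff, Finset.mem_univ, true_and,
    Finset.mem_insert, Finset.mem_singleton] at hz1 hz2
  have hzw1 : z ≠ w1 := fun h => hz1.1 (Or.inl h)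
  have hzw2 : z ≠ w2 := fun h => hz1.1 (Or.inr h)
  have hzv : z ≠ v := fun h => hz2.1 (Or.inl h)
  apply hfree
  refine ⟨![w1, w2, z, v], ?_, ?_, ?_⟩
  · intro i j hij
    fin_cases i <;> fin_cases j <;>
      simp_all [Matrix.cons_val_zero, Matrix.cons_val_one] <;>
      first
        | rfl
        | (exact absurd hij (by tauto))
        | (exact absurd hij.symm (by tauto))
  · intro e he
    have he' : e = Finset.univ.erase (3 : Fin 4) ∨ e = Finset.univ.erase (1 : Fin 4) := by
      simpa [TkPDG] using he
    rcases he' with rfl | rfl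
    · have himg : (Finset.univ.erase (3 : Fin 4)).image ![w1, w2, z, v]
          = insert z {w1, w2} := by
        have : Finset.univ.erase (3 : Fin 4) = ({0, 1, 2} : Finset (Fin 4)) := by decide
        rw [this]
        simp only [Finset.image_insert, Finset.image_singleton]
        ext x
        simp only [Finset.mem_insert, Finset.mem_singleton, Matrix.cons_val_zero,
          Matrix.cons_val_one, Matrix.head_cons]
        constructor <;> intro h <;> rcases h with h | h | h <;> tauto
      rw [himg]
      exact mem_Eset_cases hz1.2
    · have himg : (Finset.univ.erase (1 : Fin 4)).image ![w1, w2, z, v]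
          = insert z {v, w1} := by
        have : Finset.univ.erase (1 : Fin 4) = ({0, 2, 3} : Finset (Fin 4)) := by decide
        rw [this]
        simp only [Finset.image_insert, Finset.image_singleton]
        ext x
        simp only [Finset.mem_insert, Finset.mem_singleton, Matrix.cons_val_zero,
          Matrix.cons_val_one, Matrix.head_cons]
        constructor <;> intro h <;> rcases h with h | h | h <;> tauto
      rw [himg]
      exact mem_Eset_cases hz2.2
  · intro q hq
    have hq' : q = (Finset.univ.erase (2 : Fin 4), (3 : Fin 4)) := by
      simpa [TkPDG] using hq
    subst hq'
    have himg : (Finset.univ.erase (2 : Fin 4)).image ![w1, w2, z, v]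
        = insert v {w1, w2} := by
      have : Finset.univ.erase (2 : Fin 4) = ({0, 1, 3} : Finset (Fin 4)) := by decide
      rw [this]
      simp only [Finset.image_insert, Finset.image_singleton]
      ext x
      simp only [Finset.mem_insert, Finset.mem_singleton, Matrix.cons_val_zero,
        Matrix.cons_val_one, Matrix.head_cons]
      constructor <;> intro h <;> rcases h with h | h | h <;> tauto
    simp only [himg]
    have : ((![w1, w2, z, v] : Fin 4 → Fin n) (3 : Fin 4)) = v := rfl
    rw [this, ← hA']
    exact hp

lemma numeric_ineq {a b c N : ℝ} (h15 : 15 ≤ N) (ha1 : 1 ≤ a) (hb1 : 1 ≤ b) (hc1 : 1 ≤ c)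
    (hb2 : b + 2 ≤ N) (hc2 : c + 2 ≤ N)
    (hab : a + b ≤ N) (hac : a + c ≤ N) :
    2 ≤ (N - 2 - a) / a + (N - 2 - b) / b + (N - 2 - c) / c := by
  have ha0 : (0:ℝ) < a := by linarith
  have hb0 : (0:ℝ) < b := by linarith
  have hc0 : (0:ℝ) < c := by linarith
  have hNa : (0:ℝ) < N - a := by linarith
  have hK : 0 ≤ 5 * a ^ 2 - 4 * a * N + N ^ 2 - 2 * N - 2 * a := by
    nlinarith [sq_nonneg (10 * a - 4 * N - 2)]
  have hT : 0 ≤ (N - 2) * (a * b + b * c + c * a) - 5 * (a * b * c) := by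
    have hid : ((N - 2) * (a * b + b * c + c * a) - 5 * (a * b * c)) * (N - a)
        = b * c * (5 * a ^ 2 - 4 * a * N + N ^ 2 - 2 * N - 2 * a)
          + a * (N - 2) * b * (N - a - c) + a * (N - 2) * c * (N - a - b) := by
      ring
    nlinarith [mul_nonneg (mul_nonneg hb0.le hc0.le) hK,
      mul_nonneg (mul_nonneg (mul_nonneg ha0.le (by linarith : (0:ℝ) ≤ N - 2)) hb0.le)
        (by linarith : (0:ℝ) ≤ N - a - c),
      mul_nonneg (mul_nonneg (mul_nonneg ha0.le (by linarith : (0:ℝ) ≤ N - 2)) hc0.le)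
        (by linarith : (0:ℝ) ≤ N - a - b)]
  rw [← sub_nonneg]
  have heq : (N - 2 - a) / a + (N - 2 - b) / b + (N - 2 - c) / c - 2
      = ((N - 2) * (a * b + b * c + c * a) - 5 * (a * b * c)) / (a * b * c) := by
    field_simp
    ring
  rw [heq]
  positivity

lemma pairs_subset_eq {A : Finset (Fin n)} {v w1 w2 : Fin n} (hw12 : w1 ≠ w2)
    (hv1 : v ≠ w1) (hv2 : v ≠ w2) (hA : A = insert v {w1, w2}) :
    (Finset.univ.powersetCard 2).filter (fun R => R ⊆ A)
      = {({w1, w2} : Finset (Fin n)), {v, w1}, {v, w2}} := by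
  ext S
  simp only [Finset.mem_filter, Finset.mem_powersetCard, Finset.subset_univ, true_and,
    Finset.mem_insert, Finset.mem_singleton]
  constructor
  · rintro ⟨hcard, hsub⟩
    obtain ⟨x, y, hxy, rfl⟩ := Finset.card_eq_two.1 hcard
    have hx : x = v ∨ x = w1 ∨ x = w2 := by
      have := hsub (Finset.mem_insert_self x {y})
      rw [hA] at this; simpa using this
    have hy : y = v ∨ y = w1 ∨ y = w2 := by
      have := hsub (by simp : y ∈ ({x, y} : Finset (Fin n)))
      rw [hA] at this; simpa using this
    rcases hx with rfl | rfl | rfl <;> rcases hy with rfl | rfl | rfl <;>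
      first
        | (exact absurd rfl hxy)
        | (exact Or.inl rfl)
        | (exact Or.inl (Finset.pair_comm _ _))
        | (exact Or.inr (Or.inl rfl))
        | (exact Or.inr (Or.inl (Finset.pair_comm _ _)))
        | (exact Or.inr (Or.inr rfl))
        | (exact Or.inr (Or.inr (Finset.pair_comm _ _)))
  · rintro (rfl | rfl | rfl) <;>
      refine ⟨?_, ?_⟩ <;>
      first
        | (rw [Finset.card_pair (by tauto)])
        | (rw [hA]; intro x hx; simp only [Finset.mem_insert, Finset.mem_singleton] at hx ⊢;
           tauto)

lemma per_edge {H : PDG (Fin n)} (hval : H.IsValid 3)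
    (hfree : ¬ (TkPDG 3).IsSubgraph H) (hn : 15 ≤ n)
    {p : Finset (Fin n) × Fin n} (hp : p ∈ H.dir) :
    2 ≤ ∑ R ∈ (Finset.univ.powersetCard 2).filter (fun R => R ⊆ p.1),
      ((n : ℝ) - 2 - deg H R) / (deg H R) := by
  set v := p.2 with hv
  have hvA : v ∈ p.1 := (hval.2.1 p hp).2
  have hA3 : p.1.card = 3 := (hval.2.1 p hp).1
  have hQcard : (p.1.erase v).card = 2 := by
    rw [Finset.card_erase_of_mem hvA, hA3]
  obtain ⟨w1, w2, hw12, hQ⟩ := Finset.card_eq_two.1 hQcard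
  have hv1 : v ≠ w1 := by
    intro h
    have : w1 ∈ p.1.erase v := by rw [hQ]; simp
    exact (Finset.notMem_erase v p.1) (h ▸ this)
  have hv2 : v ≠ w2 := by
    intro h
    have : w2 ∈ p.1.erase v := by rw [hQ]; simp
    exact (Finset.notMem_erase v p.1) (h ▸ this)
  have hA' : p.1 = insert v {w1, w2} := by
    rw [← hQ, Finset.insert_erase hvA]
  rw [pairs_subset_eq hw12 hv1 hv2 hA']
  have hne1 : ({w1, w2} : Finset (Fin n)) ∉ ({({v, w1} : Finset (Fin n)), {v, w2}} :
      Finset (Finset (Fin n))) := by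
    simp only [Finset.mem_insert, Finset.mem_singleton]
    rintro (h | h) <;>
    · have : v ∈ ({w1, w2} : Finset (Fin n)) := by rw [h]; simp
      simp only [Finset.mem_insert, Finset.mem_singleton] at this; tauto
  have hne2 : ({v, w1} : Finset (Fin n)) ∉ ({({v, w2} : Finset (Fin n))} :
      Finset (Finset (Fin n))) := by
    simp only [Finset.mem_singleton]
    intro h
    have : w1 ∈ ({v, w2} : Finset (Fin n)) := by rw [← h]; simp
    simp only [Finset.mem_insert, Finset.mem_singleton] at this; tauto
  rw [Finset.sum_insert hne1, Finset.sum_insert hne2, Finset.sum_singleton]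
  -- degrees
  have hEA : p.1 ∈ Eset H := Finset.mem_union_right _ (Finset.mem_image_of_mem _ hp)
  have hsubQ : ({w1, w2} : Finset (Fin n)) ⊆ p.1 := by
    rw [hA']; intro x hx; simp only [Finset.mem_insert, Finset.mem_singleton] at hx ⊢; tauto
  have hsub1 : ({v, w1} : Finset (Fin n)) ⊆ p.1 := by
    rw [hA']; intro x hx; simp only [Finset.mem_insert, Finset.mem_singleton] at hx ⊢; tauto
  have hsub2 : ({v, w2} : Finset (Fin n)) ⊆ p.1 := by
    rw [hA']; intro x hx; simp only [Finset.mem_insert, Finset.mem_singleton] at hx ⊢; tauto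
  have hdegpos : ∀ R : Finset (Fin n), R ⊆ p.1 → 1 ≤ deg H R := by
    intro R hR
    exact Finset.card_pos.2 ⟨p.1, Finset.mem_filter.2 ⟨hEA, hR⟩⟩
  have hcQ : ({w1, w2} : Finset (Fin n)).card = 2 := Finset.card_pair hw12
  have hc1 : ({v, w1} : Finset (Fin n)).card = 2 := Finset.card_pair hv1
  have hc2 : ({v, w2} : Finset (Fin n)).card = 2 := Finset.card_pair hv2
  -- disjoint links
  have hd1 : deg H {w1, w2} + deg H {v, w1} ≤ n := by
    have hdsj := links_disjoint hval hfree hp hw12 hQ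
    rw [deg_eq_lk hval hcQ, deg_eq_lk hval hc1, ← Finset.card_union_of_disjoint hdsj]
    simpa using Finset.card_le_univ (lk H {w1, w2} ∪ lk H {v, w1})
  have hd2 : deg H {w1, w2} + deg H {v, w2} ≤ n := by
    have hQ' : p.1.erase v = {w2, w1} := by rw [hQ, Finset.pair_comm]
    have hdsj : Disjoint (lk H {w1, w2}) (lk H {v, w2}) := by
      rw [Finset.pair_comm w1 w2]
      exact links_disjoint hval hfree hp hw12.symm hQ'
    rw [deg_eq_lk hval hcQ, deg_eq_lk hval hc2, ← Finset.card_union_of_disjoint hdsj]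
    simpa using Finset.card_le_univ (lk H {w1, w2} ∪ lk H {v, w2})
  -- apply the numeric inequality
  have hb2 : deg H {v, w1} + 2 ≤ n := deg_le hval hc1
  have hcc2 : deg H {v, w2} + 2 ≤ n := deg_le hval hc2
  rw [← add_assoc]
  apply numeric_ineq (a := (deg H {w1, w2} : ℝ)) (b := (deg H {v, w1} : ℝ))
      (c := (deg H {v, w2} : ℝ)) (N := (n : ℝ))
  · exact_mod_cast hn
  · exact_mod_cast hdegpos _ hsubQ
  · exact_mod_cast hdegpos _ hsub1
  · exact_mod_cast hdegpos _ hsub2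
  · exact_mod_cast hb2
  · exact_mod_cast hcc2
  · exact_mod_cast hd1
  · exact_mod_cast hd2

theorem main_bound {H : PDG (Fin n)} (hval : H.IsValid 3)
    (hfree : ¬ (TkPDG 3).IsSubgraph H) (hn : 15 ≤ n) :
    (H.undir.card : ℝ) + (5 / 3) * H.dir.card ≤ (n.choose 3 : ℝ) := by
  classical
  set P : Finset (Finset (Fin n)) := Finset.univ.powersetCard 2 with hP
  set c : Finset (Fin n) → ℝ := fun R => ((n : ℝ) - 2 - deg H R) / (deg H R) with hc
  have key : 2 * (H.dir.card : ℝ) ≤ ∑ R ∈ P, ((n : ℝ) - 2 - deg H R) := by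
    have step1 : 2 * (H.dir.card : ℝ) ≤ ∑ p ∈ H.dir, ∑ R ∈ P.filter (fun R => R ⊆ p.1), c R := by
      rw [mul_comm]
      calc (H.dir.card : ℝ) * 2 = ∑ _p ∈ H.dir, (2 : ℝ) := by
            rw [Finset.sum_const, nsmul_eq_mul]
        _ ≤ _ := Finset.sum_le_sum (fun p hp => per_edge hval hfree hn hp)
    have step2 : ∑ p ∈ H.dir, ∑ R ∈ P.filter (fun R => R ⊆ p.1), c R
        = ∑ R ∈ P, ((H.dir.filter (fun p => R ⊆ p.1)).card : ℝ) * c R := by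
      simp_rw [Finset.sum_filter]
      rw [Finset.sum_comm]
      refine Finset.sum_congr rfl (fun R _ => ?_)
      rw [← Finset.sum_filter, Finset.sum_const, nsmul_eq_mul]
    have step3 : ∀ R ∈ P, ((H.dir.filter (fun p => R ⊆ p.1)).card : ℝ) * c R
        ≤ (n : ℝ) - 2 - deg H R := by
      intro R hR
      have hRc : R.card = 2 := (Finset.mem_powersetCard.1 hR).2
      have hdd : (H.dir.filter (fun p => R ⊆ p.1)).card ≤ deg H R := dirdeg_le hval R
      have hub : deg H R + 2 ≤ n := deg_le hval hRc
      rcases Nat.eq_zero_or_pos (deg H R) with h0 | hpos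
      · have : (H.dir.filter (fun p => R ⊆ p.1)).card = 0 := by omega
        rw [this, h0]
        push_cast
        simp only [Nat.cast_zero, zero_mul]
        have : (15 : ℝ) ≤ n := by exact_mod_cast hn
        linarith
      · have hd0 : (0 : ℝ) < deg H R := by exact_mod_cast hpos
        have hcnn : 0 ≤ c R := by
          apply div_nonneg _ hd0.le
          have : (deg H R : ℝ) + 2 ≤ n := by exact_mod_cast hub
          linarith
        calc ((H.dir.filter (fun p => R ⊆ p.1)).card : ℝ) * c R
            ≤ (deg H R : ℝ) * c R := by
              apply mul_le_mul_of_nonneg_right _ hcnn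
              exact_mod_cast hdd
          _ = (n : ℝ) - 2 - deg H R := by
              rw [hc]
              field_simp
    calc 2 * (H.dir.card : ℝ) ≤ _ := step1
      _ = _ := step2
      _ ≤ _ := Finset.sum_le_sum step3
  -- evaluate the right side
  have hPcard : P.card = n.choose 2 := by
    rw [hP, Finset.card_powersetCard, Finset.card_univ, Fintype.card_fin]
  have hsumdeg : ∑ R ∈ P, ((deg H R : ℝ)) = 3 * ((Eset H).card : ℝ) := by
    exact_mod_cast congrArg (Nat.cast : ℕ → ℝ) (sum_deg hval)
  have hchoose : (n.choose 3 : ℝ) * 3 = (n.choose 2 : ℝ) * ((n : ℝ) - 2) := by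
    have := Nat.choose_succ_right_eq n 2
    have h2 : ((n - 2 : ℕ) : ℝ) = (n : ℝ) - 2 := by
      have : 2 ≤ n := by omega
      push_cast [this]
      ring
    have this' : n.choose 3 * 3 = n.choose 2 * (n - 2) := by simpa using this
    calc (n.choose 3 : ℝ) * 3 = ((n.choose 3 * 3 : ℕ) : ℝ) := by push_cast; ring
      _ = ((n.choose 2 * (n - 2) : ℕ) : ℝ) := by rw [this']
      _ = (n.choose 2 : ℝ) * ((n : ℝ) - 2) := by rw [Nat.cast_mul, h2]
  have hsum : ∑ R ∈ P, ((n : ℝ) - 2 - deg H R)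
      = 3 * (n.choose 3 : ℝ) - 3 * ((Eset H).card : ℝ) := by
    rw [Finset.sum_sub_distrib, hsumdeg, Finset.sum_const, hPcard, nsmul_eq_mul]
    linarith [hchoose]
  have hE : ((Eset H).card : ℝ) = (H.undir.card : ℝ) + (H.dir.card : ℝ) := by
    exact_mod_cast congrArg (Nat.cast : ℕ → ℝ) (Eset_card hval)
  rw [hsum, hE] at key
  linarith


end Aux

/-- `π(T_3, 5/3) = 1`: for every `ε > 0` there is `n₀` such that every
`T_3`-free `3`-PDG on `n ≥ n₀` vertices satisfies `e_u(H) + (5/3)·e_d(H) ≤ (1+ε)·C(n,3)`. -/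
theorem turan_T3 (ε : ℝ) (hε : 0 < ε) :
    ∃ n₀ : ℕ, ∀ n ≥ n₀, ∀ H : PDG (Fin n),
      H.IsValid 3 → ¬ (TkPDG 3).IsSubgraph H →
      (H.undir.card : ℝ) + (5 / 3) * H.dir.card ≤ (1 + ε) * n.choose 3 := by
  refine ⟨15, fun n hn H hval hfree => ?_⟩
  have h := main_bound hval hfree hn
  have hnn : (0 : ℝ) ≤ (n.choose 3 : ℝ) := Nat.cast_nonneg _
  nlinarith [mul_nonneg hε.le hnn]
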